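/- If a non-increasing probability distribution P = (p_1,...,p_n) satisfying the AUH constraints maximizes the entropy H(P), then p_i ≤ q_i := sum_{j>i} p_j for all i = 1,...,n-2. -/

import Mathlib

open Finset

lemma negMulLog_transfer {a b ε : ℝ} (ha : 0 ≤ a) (hb : 0 ≤ b) (hε : 0 < ε)
    (h : 2 * ε ≤ a - b) :
    Real.negMulLog a + Real.negMulLog b
      < Real.negMulLog (a - ε) + Real.negMulLog (b + ε) := by
  have hba : b < a := by linarith
  have hab : a ≠ b := by linarith
  set t : ℝ := ε / (a - b) with ht
  have habpos : 0 < a - b := by linarith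
  have ht0 : 0 < t := div_pos hε habpos
  have ht1 : t < 1 := by
    rw [div_lt_one habpos]; linarith
  have hC := Real.strictConcaveOn_negMulLog
  have h1 := hC.2 (Set.mem_Ici.2 ha) (Set.mem_Ici.2 hb) hab
      (sub_pos.2 ht1) ht0 (by ring)
  have h2 := hC.2 (Set.mem_Ici.2 ha) (Set.mem_Ici.2 hb) hab
      ht0 (sub_pos.2 ht1) (by ring)
  have key : t * (a - b) = ε := div_mul_cancel₀ ε habpos.ne'
  have e1 : (1 - t) • a + t • b = a - ε := by
    simp only [smul_eq_mul]; linear_combination -key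
  have e2 : t • a + (1 - t) • b = b + ε := by
    simp only [smul_eq_mul]; linear_combination key
  rw [e1] at h1
  rw [e2] at h2
  simp only [smul_eq_mul] at h1 h2
  nlinarith

/-- A non-increasing probability distribution on symbols `1,…,n` satisfying the
anti-uniform Huffman (AUH) constraints. -/
def IsAUH (n : ℕ) (p : ℕ → ℝ) : Prop :=
  (∀ i ∈ Finset.Icc 1 n, 0 ≤ p i) ∧
  (∀ i j, 1 ≤ i → i ≤ j → j ≤ n → p j ≤ p i) ∧
  (∑ i ∈ Finset.Icc 1 n, p i = 1) ∧
  (∀ i, 1 ≤ i → i ≤ n - 2 → ∑ j ∈ Finset.Icc (i + 2) n, p j ≤ p i)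

/-- Entropy (base 2) of a distribution on symbols `1,…,n`. -/
noncomputable def entropy (n : ℕ) (p : ℕ → ℝ) : ℝ :=
  -∑ i ∈ Finset.Icc 1 n, p i * Real.logb 2 (p i)

/-- If an AUH distribution maximizes the entropy, then `p i ≤ q i = ∑_{j > i} p j`
for all `i = 1,…,n-2`. -/
theorem maxEntropy_le_node (n : ℕ) (hn : 2 ≤ n) (p : ℕ → ℝ) (hp : IsAUH n p)
    (hmax : ∀ p' : ℕ → ℝ, IsAUH n p' → entropy n p' ≤ entropy n p) :
    ∀ i, 1 ≤ i → i ≤ n - 2 → p i ≤ ∑ j ∈ Finset.Icc (i + 1) n, p j := by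
  intro i hi1 hi2
  by_contra hlt
  push_neg at hlt
  obtain ⟨hnn, hmono, hone, hcon⟩ := hp
  set a : ℝ := p i with haa
  set b : ℝ := p (i + 1) with hbb
  set q : ℝ := ∑ j ∈ Finset.Icc (i + 1) n, p j with hqq
  have hi2n : i + 2 ≤ n := by omega
  have hi1n : i + 1 ≤ n := by omega
  have hin : i ≤ n := by omega
  have hiI : i ∈ Finset.Icc 1 n := by simp [Finset.mem_Icc]; omega
  have hi1I : i + 1 ∈ Finset.Icc 1 n := by simp [Finset.mem_Icc]; omega
  -- split q
  have hins : Finset.Icc (i + 1) n = insert (i + 1) (Finset.Icc (i + 2) n) := by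
    ext x; simp [Finset.mem_Icc, Finset.mem_insert]; omega
  have hqsplit : q = b + ∑ j ∈ Finset.Icc (i + 2) n, p j := by
    rw [hqq, hins, Finset.sum_insert (by simp)]
  have hrest : 0 ≤ ∑ j ∈ Finset.Icc (i + 2) n, p j := by
    apply Finset.sum_nonneg
    intro j hj
    exact hnn j (by simp [Finset.mem_Icc] at hj ⊢; omega)
  have hbq : b ≤ q := by rw [hqsplit]; linarith
  have ha0 : 0 ≤ a := hnn i hiI
  have hb0 : 0 ≤ b := hnn (i + 1) hi1I
  have hq0 : 0 ≤ q := le_trans hb0 hbq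
  set ε : ℝ := (a - q) / 2 with hεdef
  have hε : 0 < ε := by simp only [hεdef]; linarith
  have h2ε : 2 * ε ≤ a - b := by simp only [hεdef]; linarith
  -- the perturbed distribution
  set p' : ℕ → ℝ := fun j =>
    p j + (if j = i + 1 then ε else 0) - (if j = i then ε else 0) with hp'def
  have hp'i : p' i = a - ε := by simp [hp'def]; rfl
  have hp'i1 : p' (i + 1) = b + ε := by simp [hp'def]; rfl
  have hp'o : ∀ j, j ≠ i → j ≠ i + 1 → p' j = p j := by
    intro j h1 h2; simp [hp'def, h1, h2]
  have hsum : ∀ m : ℕ, ∑ j ∈ Finset.Icc m n, p' j =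
      (∑ j ∈ Finset.Icc m n, p j)
        + (if i + 1 ∈ Finset.Icc m n then ε else 0)
        - (if i ∈ Finset.Icc m n then ε else 0) := by
    intro m
    simp only [hp'def, Finset.sum_sub_distrib, Finset.sum_add_distrib,
      Finset.sum_ite_eq' (Finset.Icc m n)]
  -- p' is AUH
  have hAUH : IsAUH n p' := by
    refine ⟨?_, ?_, ?_, ?_⟩
    · intro j hj
      by_cases h1 : j = i
      · rw [h1, hp'i]; simp only [hεdef]; linarith
      by_cases h2 : j = i + 1
      · rw [h2, hp'i1]; linarith
      · rw [hp'o j h1 h2]; exact hnn j hj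
    · intro k l hk hkl hln
      have hpl : ∀ l', i + 1 ≤ l' → l' ≤ n → p' l' ≤ b + ε := by
        intro l' h1 h2
        by_cases hl' : l' = i + 1
        · rw [hl', hp'i1]
        · rw [hp'o l' (by omega) hl']
          have := hmono (i + 1) l' (by omega) h1 h2
          linarith
      have hmid : b + ε ≤ a - ε := by linarith
      have hhigh : ∀ k', 1 ≤ k' → k' ≤ i → a - ε ≤ p' k' := by
        intro k' h1 h2
        by_cases hk' : k' = i
        · rw [hk', hp'i]
        · rw [hp'o k' hk' (by omega)]
          have := hmono k' i h1 h2 hin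
          simp only [← haa] at this
          linarith
      by_cases hli : l ≤ i
      · by_cases hle : l = i
        · rw [hle, hp'i]; exact hhigh k hk (by omega)
        · rw [hp'o l (by omega) (by omega), hp'o k (by omega) (by omega)]
          exact hmono k l hk hkl hln
      · push_neg at hli
        by_cases hki : k ≤ i
        · exact le_trans (hpl l hli hln) (le_trans hmid (hhigh k hk hki))
        · push_neg at hki
          by_cases hke : k = i + 1
          · rw [hke, hp'i1]; exact hpl l hli hln
          · rw [hp'o l (by omega) (by omega), hp'o k (by omega) hke]
            exact hmono k l hk hkl hln
    · rw [hsum 1, if_pos hiI, if_pos hi1I, hone]; ring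
    · intro k hk1 hk2
      have hk2n : k + 2 ≤ n := by omega
      rw [hsum (k + 2)]
      by_cases hc1 : k + 2 ≤ i
      · rw [if_pos (by simp [Finset.mem_Icc]; omega),
          if_pos (by simp [Finset.mem_Icc]; omega),
          hp'o k (by omega) (by omega)]
        have := hcon k hk1 hk2
        linarith
      · by_cases hc2 : k + 2 ≤ i + 1
        · -- k + 2 = i + 1
          have hke : k + 2 = i + 1 := by omega
          rw [if_pos (by simp [Finset.mem_Icc]; omega),
            if_neg (by simp [Finset.mem_Icc]; omega),
            hp'o k (by omega) (by omega), hke]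
          have hmk := hmono k i hk1 (by omega) hin
          simp only [← haa] at hmk
          simp only [← hqq, hεdef]
          linarith
        · by_cases hc3 : k = i
          · rw [if_neg (by simp [Finset.mem_Icc]; omega),
              if_neg (by simp [Finset.mem_Icc]; omega), hc3, hp'i]
            have : ∑ j ∈ Finset.Icc (i + 2) n, p j = q - b := by
              rw [hqsplit]; ring
            rw [this]
            simp only [hεdef]; linarith
          · -- k ≥ i + 1
            have hki1 : i + 1 ≤ k := by omega
            rw [if_neg (by simp [Finset.mem_Icc]; omega),
              if_neg (by simp [Finset.mem_Icc]; omega)]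
            have hS := hcon k hk1 hk2
            by_cases hke : k = i + 1
            · rw [hke, hp'i1]; rw [hke] at hS; linarith
            · rw [hp'o k (by omega) hke]; linarith
  -- entropy strictly increases: contradiction
  have hlog2 : (0 : ℝ) < Real.log 2 := Real.log_pos (by norm_num)
  have hent : entropy n p < entropy n p' := by
    unfold entropy
    rw [neg_lt_neg_iff]
    have hsplit : ∀ g : ℕ → ℝ, ∑ j ∈ Finset.Icc 1 n, g j =
        g i + g (i + 1) + ∑ j ∈ ((Finset.Icc 1 n).erase i).erase (i + 1), g j := by
      intro g
      rw [← Finset.add_sum_erase _ g hiI,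
        ← Finset.add_sum_erase _ g (Finset.mem_erase.2 ⟨by omega, hi1I⟩)]
      ring
    rw [hsplit (fun j => p' j * Real.logb 2 (p' j)),
      hsplit (fun j => p j * Real.logb 2 (p j))]
    have heq : ∑ j ∈ ((Finset.Icc 1 n).erase i).erase (i + 1),
        p' j * Real.logb 2 (p' j)
        = ∑ j ∈ ((Finset.Icc 1 n).erase i).erase (i + 1),
        p j * Real.logb 2 (p j) := by
      apply Finset.sum_congr rfl
      intro j hj
      simp only [Finset.mem_erase] at hj
      rw [hp'o j hj.2.1 hj.1]
    rw [heq]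
    have hkey := negMulLog_transfer ha0 hb0 hε h2ε
    have hrel : ∀ x : ℝ, x * Real.logb 2 x = -(Real.negMulLog x) / Real.log 2 := by
      intro x
      rw [Real.negMulLog, Real.logb]
      field_simp
    simp only [hp'i, hp'i1, ← haa, ← hbb, hrel]
    have h' : -(a - ε).negMulLog + -(b + ε).negMulLog
        < -a.negMulLog + -b.negMulLog := by linarith
    have h2 := (div_lt_div_iff_of_pos_right hlog2).2 h'
    rw [add_div, add_div] at h2
    exact add_lt_add_left h2 _
  exact absurd (hmax p' hAUH) (not_le.2 hent)
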